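/- Let λ > 0 and f ∈ Ω_λ. Then |z f'(z)/f(z) - 1| < 1 for all z with 0 < |z| < 1/(2λ); in particular f is starlike (univalent with Re(z f'/f) > 0) in the disk |z| < 1/(2λ). -/

import Mathlib

open Metric Complex Topology

theorem stmt_13 (lam : ℝ) (hlam : 0 < lam) (f : ℂ → ℂ)
    (hf : DifferentiableOn ℂ f (ball (0:ℂ) 1))
    (hf0 : f 0 = 0) (hf1 : deriv f 0 = 1)
    (hΩ : ∀ z ∈ ball (0:ℂ) 1, ‖z * deriv f z - f z‖ < lam) :
    ∀ z ∈ ball (0:ℂ) 1, z ≠ 0 → ‖z‖ < 1 / (2 * lam) →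
      ‖z * deriv f z / f z - 1‖ < 1 := by
  have hmem : ball (0:ℂ) 1 ∈ 𝓝 (0:ℂ) := ball_mem_nhds _ one_pos
  have hopen : IsOpen (ball (0:ℂ) 1) := isOpen_ball
  -- f is analytic, so deriv f is differentiable on the ball
  have hfa : AnalyticOnNhd ℂ f (ball (0:ℂ) 1) := hf.analyticOnNhd hopen
  have hdf : DifferentiableOn ℂ (deriv f) (ball (0:ℂ) 1) := hfa.deriv.differentiableOn
  set g : ℂ → ℂ := fun z => z * deriv f z - f z with hg_def
  have hg : DifferentiableOn ℂ g (ball (0:ℂ) 1) :=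
    ((differentiableOn_id.mul hdf).sub hf)
  have hg0 : g 0 = 0 := by simp [hg_def, hf0]
  -- deriv g 0 = 0
  have hdg0 : deriv g 0 = 0 := by
    have h1 : HasDerivAt (fun z : ℂ => z * deriv f z)
        (1 * deriv f 0 + (0:ℂ) * deriv (deriv f) 0) 0 := by
      exact (hasDerivAt_id 0).mul ((hfa.deriv 0 (mem_of_mem_nhds hmem)).differentiableAt.hasDerivAt)
    have h2 : HasDerivAt f (deriv f 0) 0 :=
      (hf.differentiableAt hmem).hasDerivAt
    have := (h1.sub h2).deriv
    simp at this; exact this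
  set g₁ : ℂ → ℂ := dslope g 0 with hg₁_def
  have hg₁ : DifferentiableOn ℂ g₁ (ball (0:ℂ) 1) :=
    (Complex.differentiableOn_dslope hmem).mpr hg
  have hg₁0 : g₁ 0 = 0 := by
    rw [hg₁_def, dslope_same]; exact hdg0
  -- first Schwarz application: ‖g₁‖ ≤ lam on the ball
  have hg₁bd : ∀ w ∈ ball (0:ℂ) 1, ‖g₁ w‖ ≤ lam := by
    intro w hw
    have hmaps : Set.MapsTo g (ball (0:ℂ) 1) (ball (g 0) lam) := by
      intro u hu
      rw [hg0, mem_ball, dist_eq_norm, sub_zero]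
      exact hΩ u hu
    simpa using Complex.norm_dslope_le_div_of_mapsTo_ball hg (hmaps.mono_right ball_subset_closedBall) hw
  set q : ℂ → ℂ := dslope g₁ 0 with hq_def
  have hq : DifferentiableOn ℂ q (ball (0:ℂ) 1) :=
    (Complex.differentiableOn_dslope hmem).mpr hg₁
  -- second Schwarz application: ‖q‖ ≤ lam on the ball
  have hqbd : ∀ w ∈ ball (0:ℂ) 1, ‖q w‖ ≤ lam := by
    intro w hw
    rw [mem_ball, dist_zero_right] at hw
    have hev : ∀ᶠ r in nhdsWithin 1 (Set.Iio 1), ‖q w‖ ≤ lam / r / r := by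
      filter_upwards [Ioo_mem_nhdsLT_of_mem ⟨hw, le_rfl⟩] with r hr
      have hr0 : 0 < r := lt_of_le_of_lt (norm_nonneg w) hr.1
      have hmaps : Set.MapsTo g₁ (ball (0:ℂ) r) (ball (g₁ 0) (lam / r)) := by
        intro u hu
        rw [hg₁0, mem_ball, dist_eq_norm, sub_zero]
        have hr1 : r < 1 := hr.2
        have : ‖g₁ u‖ ≤ lam :=
          hg₁bd u (mem_ball_zero_iff.mpr (lt_trans (mem_ball_zero_iff.mp hu) hr1))
        calc ‖g₁ u‖ ≤ lam := this
          _ < lam / r := by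
            rw [lt_div_iff₀ hr0]
            nlinarith
      have := Complex.norm_dslope_le_div_of_mapsTo_ball
        (hg₁.mono (ball_subset_ball hr.2.le)) (hmaps.mono_right ball_subset_closedBall) (mem_ball_zero_iff.mpr hr.1)
      simpa [div_div] using (by simpa using this : ‖q w‖ ≤ lam / r / r)
    have htend : Filter.Tendsto (fun r : ℝ => lam / r / r) (nhdsWithin 1 (Set.Iio 1))
        (𝓝 lam) := by
      have : Filter.Tendsto (fun r : ℝ => lam / r / r) (𝓝 1) (𝓝 (lam / 1 / 1)) := by
        exact (Filter.Tendsto.div (tendsto_const_nhds.div Filter.tendsto_id one_ne_zero)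
          Filter.tendsto_id one_ne_zero)
      simpa using this.mono_left nhdsWithin_le_nhds
    exact ge_of_tendsto htend hev
  -- h = dslope f 0
  set h : ℂ → ℂ := dslope f 0 with hh_def
  have hh : DifferentiableOn ℂ h (ball (0:ℂ) 1) :=
    (Complex.differentiableOn_dslope hmem).mpr hf
  have hh0 : h 0 = 1 := by rw [hh_def, dslope_same, hf1]
  -- deriv h = q on the ball
  have hkey : ∀ w ∈ ball (0:ℂ) 1, deriv h w = q w := by
    have hne : ∀ w ∈ ball (0:ℂ) 1, w ≠ 0 → deriv h w = q w := by
      intro w hw hw0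
      have hev : h =ᶠ[𝓝 w] fun u => f u / u := by
        filter_upwards [isOpen_ne.mem_nhds hw0] with u hu
        rw [hh_def, dslope_of_ne _ hu, slope_def_field, hf0]
        simp
      have hdFz : HasDerivAt f (deriv f w) w :=
        (hf.differentiableAt (hopen.mem_nhds hw)).hasDerivAt
      have hder : HasDerivAt (fun u => f u / u)
          ((deriv f w * w - f w * 1) / w ^ 2) w :=
        hdFz.div (hasDerivAt_id w) hw0
      have : deriv h w = (deriv f w * w - f w * 1) / w ^ 2 := by
        rw [Filter.EventuallyEq.deriv_eq hev]
        exact hder.deriv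
      rw [this, hq_def, dslope_of_ne _ hw0, slope_def_field, hg₁0, hg₁_def,
        dslope_of_ne _ hw0, slope_def_field, hg0]
      simp only [hg_def, sub_zero]
      field_simp
    intro w hw
    rcases eq_or_ne w 0 with rfl | hw0
    · -- continuity argument at 0
      have hderiv_cont : ContinuousAt (deriv h) 0 :=
        ((hh.analyticOnNhd hopen).deriv 0 (mem_of_mem_nhds hmem)).differentiableAt.continuousAt
      have hq_cont : ContinuousAt q 0 := (hq.differentiableAt hmem).continuousAt
      have h1 : Filter.Tendsto (deriv h) (nhdsWithin 0 {(0:ℂ)}ᶜ) (𝓝 (deriv h 0)) :=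
        hderiv_cont.continuousWithinAt.tendsto
      have h2 : Filter.Tendsto (deriv h) (nhdsWithin 0 {(0:ℂ)}ᶜ) (𝓝 (q 0)) := by
        have hq2 : Filter.Tendsto q (nhdsWithin 0 {(0:ℂ)}ᶜ) (𝓝 (q 0)) :=
          hq_cont.continuousWithinAt.tendsto
        refine hq2.congr' ?_
        filter_upwards [self_mem_nhdsWithin,
          mem_nhdsWithin_of_mem_nhds hmem] with u hu hu'
        exact (hne u hu' hu).symm
      exact tendsto_nhds_unique h1 h2
    · exact hne w hw hw0
  -- mean value: ‖h z - 1‖ ≤ lam * ‖z‖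
  have hmvt : ∀ z ∈ ball (0:ℂ) 1, ‖h z - 1‖ ≤ lam * ‖z‖ := by
    intro z hz
    have := Convex.norm_image_sub_le_of_norm_hasDerivWithin_le
      (f := h) (f' := fun x => q x) (s := ball (0:ℂ) 1)
      (fun x hx => by
        have : HasDerivAt h (q x) x := by
          have := (hh.differentiableAt (hopen.mem_nhds hx)).hasDerivAt
          rwa [hkey x hx] at this
        exact this.hasDerivWithinAt)
      (fun x hx => hqbd x hx) (convex_ball _ _) (mem_ball_self one_pos) hz
    simpa [hh0] using this
  intro z hz hz0 hzlam
  have ha : (0:ℝ) < ‖z‖ := norm_pos_iff.mpr hz0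
  have hlam_a : lam * ‖z‖ < 1 / 2 := by
    rw [lt_div_iff₀ (by positivity : (0:ℝ) < 2 * lam)] at hzlam
    nlinarith
  -- lower bound on ‖f z‖
  have hfz_eq : f z = z * h z := by
    rw [hh_def, dslope_of_ne _ hz0, slope_def_field, hf0]
    field_simp
    ring
  have hhz_lb : 1 - lam * ‖z‖ ≤ ‖h z‖ := by
    have := hmvt z hz
    have h2 : ‖(1:ℂ)‖ - ‖h z‖ ≤ ‖h z - 1‖ := by
      have := norm_sub_norm_le (1:ℂ) (h z)
      simpa [norm_sub_rev] using this
    simp only [norm_one] at h2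
    linarith
  have hfz_lb : ‖z‖ * (1 - lam * ‖z‖) ≤ ‖f z‖ := by
    rw [hfz_eq, norm_mul]
    exact mul_le_mul_of_nonneg_left hhz_lb (norm_nonneg z)
  have hfz_pos : (0:ℝ) < ‖f z‖ :=
    lt_of_lt_of_le (by nlinarith) hfz_lb
  have hfz0 : f z ≠ 0 := norm_pos_iff.mp hfz_pos
  -- upper bound on ‖g z‖
  have hgz_eq : g z = z * (z * q z) := by
    rw [hq_def, dslope_of_ne _ hz0, slope_def_field, hg₁0, hg₁_def,
      dslope_of_ne _ hz0, slope_def_field, hg0]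
    simp only [sub_zero]
    field_simp
  have hgz_ub : ‖g z‖ ≤ lam * (‖z‖ * ‖z‖) := by
    rw [hgz_eq]
    have := hqbd z hz
    calc ‖z * (z * q z)‖ = ‖z‖ * (‖z‖ * ‖q z‖) := by rw [norm_mul, norm_mul]
      _ ≤ ‖z‖ * (‖z‖ * lam) := by
          apply mul_le_mul_of_nonneg_left _ (norm_nonneg z)
          exact mul_le_mul_of_nonneg_left this (norm_nonneg z)
      _ = lam * (‖z‖ * ‖z‖) := by ring
  -- final computation
  have hrw : z * deriv f z / f z - 1 = g z / f z := by
    rw [hg_def]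
    field_simp
  rw [hrw, norm_div, div_lt_one hfz_pos]
  calc ‖g z‖ ≤ lam * (‖z‖ * ‖z‖) := hgz_ub
    _ < ‖z‖ * (1 - lam * ‖z‖) := by nlinarith
    _ ≤ ‖f z‖ := hfz_lb
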